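/- Let χ be a non-principal Dirichlet character modulo q. For any finite interval of integers I (i.e., I = {M+1, ..., N} for integers M ≤ N), we have |∑_{n ∈ I} χ(n)| ≤ φ(q)/2. -/

import Mathlib

lemma aux_sum_Ioc_eq_sum_zmod {q : ℕ} [NeZero q] {M : Type*} [AddCommMonoid M]
    (f : ZMod q → M) (a : ℤ) :
    ∑ n ∈ Finset.Ioc a (a + q), f (n : ZMod q) = ∑ x : ZMod q, f x := by
  refine Finset.sum_nbij' (i := fun n => ((n : ℤ) : ZMod q))
    (j := fun x => a + 1 + ((x - ((a + 1 : ℤ) : ZMod q)).val : ℤ)) ?_ ?_ ?_ ?_ ?_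
  · intro n _; exact Finset.mem_univ _
  · intro x _
    have h := ZMod.val_lt (x - ((a + 1 : ℤ) : ZMod q))
    have hq := NeZero.pos q
    simp only [Finset.mem_Ioc]
    omega
  · intro n hn
    simp only [Finset.mem_Ioc] at hn
    have h1 : ((n : ℤ) : ZMod q) - ((a + 1 : ℤ) : ZMod q) = ((n - (a + 1) : ℤ) : ZMod q) := by
      push_cast; ring
    have h2 : (((n - (a + 1) : ℤ) : ZMod q).val : ℤ) = (n - (a + 1)) % q :=
      ZMod.val_intCast _
    have h3 : (n - (a + 1)) % q = n - (a + 1) := Int.emod_eq_of_lt (by omega) (by omega)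
    show a + 1 + (((( n : ℤ) : ZMod q) - ((a + 1 : ℤ) : ZMod q)).val : ℤ) = n
    rw [h1]
    omega
  · intro x _
    have h : ((ZMod.val (x - ((a + 1 : ℤ) : ZMod q)) : ℕ) : ZMod q)
        = x - ((a + 1 : ℤ) : ZMod q) := ZMod.natCast_rightInverse _
    show (((a + 1 + ((x - ((a + 1 : ℤ) : ZMod q)).val : ℤ)) : ℤ) : ZMod q) = x
    push_cast
    push_cast at h
    rw [h]
    ring
  · intro n _; rfl

lemma aux_disjoint (a b c : ℤ) : Disjoint (Finset.Ioc a b) (Finset.Ioc b c) := by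
  simp only [Finset.disjoint_left, Finset.mem_Ioc]
  intro n h1 h2
  omega

lemma aux_block_zero {q : ℕ} (hq : 2 ≤ q) (χ : DirichletCharacter ℂ q) (hχ : χ ≠ 1)
    (a : ℤ) : ∑ n ∈ Finset.Ioc a (a + q), χ (n : ZMod q) = 0 := by
  haveI : NeZero q := ⟨by omega⟩
  rw [aux_sum_Ioc_eq_sum_zmod (fun x => χ x) a]
  exact MulChar.sum_eq_zero_of_ne_one hχ

lemma aux_blocks_zero {q : ℕ} (hq : 2 ≤ q) (χ : DirichletCharacter ℂ q) (hχ : χ ≠ 1)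
    (a : ℤ) (t : ℕ) : ∑ n ∈ Finset.Ioc a (a + (t : ℤ) * q), χ (n : ZMod q) = 0 := by
  induction t with
  | zero => simp
  | succ t ih =>
    have hq0 : (0:ℤ) ≤ (t:ℤ) * q := by positivity
    have hsplit : Finset.Ioc a (a + ((t:ℤ) + 1) * (q:ℤ)) =
        Finset.Ioc a (a + (t:ℤ) * q) ∪ Finset.Ioc (a + (t:ℤ) * q) ((a + (t:ℤ) * q) + q) := by
      rw [Finset.Ioc_union_Ioc_eq_Ioc (by omega) (by omega)]
      congr 1
      ring
    push_cast
    rw [hsplit, Finset.sum_union (aux_disjoint _ _ _), ih, aux_block_zero hq χ hχ]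
    simp

theorem stmt_5 (q : ℕ) (hq : 2 ≤ q) (χ : DirichletCharacter ℂ q) (hχ : χ ≠ 1)
    (M N : ℤ) (hMN : M ≤ N) :
    ‖∑ n ∈ Finset.Icc (M + 1) N, χ n‖ ≤ (Nat.totient q : ℝ) / 2 := by
  classical
  haveI : NeZero q := ⟨by omega⟩
  have hq0 : (0:ℤ) < q := by exact_mod_cast (by omega : 0 < q)
  have hIcc : Finset.Icc (M + 1) N = Finset.Ioc M N := by
    ext n; simp only [Finset.mem_Icc, Finset.mem_Ioc]; omega
  rw [hIcc]
  set t : ℕ := ((N - M) / q).toNat with ht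
  set M' : ℤ := M + (t : ℤ) * q with hM'
  have htq : (t : ℤ) * q = ((N - M) / q) * q := by
    rw [ht]; congr 1
    exact Int.toNat_of_nonneg (Int.ediv_nonneg (by omega) (by omega))
  have hemod : (N - M) % q = N - M - (q:ℤ) * ((N - M) / q) := Int.emod_def _ _
  have hcomm : ((N - M) / q) * q = (q:ℤ) * ((N - M) / q) := mul_comm _ _
  have hmodpos : 0 ≤ (N - M) % q := Int.emod_nonneg _ (by omega)
  have hmodlt : (N - M) % q < q := Int.emod_lt_of_pos _ hq0
  have hd : 0 ≤ (N - M) / q := Int.ediv_nonneg (by omega) (by omega)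
  have hc : 0 ≤ (q:ℤ) * ((N - M) / q) := mul_nonneg (by omega) hd
  have h1 : M' ≤ N := by rw [hM', htq]; omega
  have h2 : N < M' + q := by rw [hM', htq]; omega
  -- reduce to the interval Ioc M' N
  have hred : ∑ n ∈ Finset.Ioc M N, χ (n : ZMod q) = ∑ n ∈ Finset.Ioc M' N, χ (n : ZMod q) := by
    have hsplit : Finset.Ioc M N = Finset.Ioc M M' ∪ Finset.Ioc M' N := by
      rw [Finset.Ioc_union_Ioc_eq_Ioc (by rw [hM', htq]; omega) h1]
    rw [hsplit, Finset.sum_union (aux_disjoint _ _ _), hM',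
      aux_blocks_zero hq χ hχ M t, zero_add]
  rw [hred]
  set S := ∑ n ∈ Finset.Ioc M' N, χ (n : ZMod q) with hS
  set T := ∑ n ∈ Finset.Ioc N (M' + q), χ (n : ZMod q) with hT
  have hST : S + T = 0 := by
    rw [hS, hT, ← Finset.sum_union (aux_disjoint _ _ _),
      Finset.Ioc_union_Ioc_eq_Ioc h1 h2.le]
    exact aux_block_zero hq χ hχ M'
  have hbound : ∀ (a b : ℤ), ‖∑ n ∈ Finset.Ioc a b, χ (n : ZMod q)‖
      ≤ ∑ n ∈ Finset.Ioc a b, (if IsUnit ((n : ℤ) : ZMod q) then (1:ℝ) else 0) := by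
    intro a b
    refine le_trans (norm_sum_le _ _) (Finset.sum_le_sum ?_)
    intro n _
    by_cases h : IsUnit ((n : ℤ) : ZMod q)
    · simp only [if_pos h]
      exact χ.norm_le_one _
    · simp only [if_neg h, χ.map_nonunit h, norm_zero, le_refl]
  have hAB : ∑ n ∈ Finset.Ioc M' N, (if IsUnit ((n : ℤ) : ZMod q) then (1:ℝ) else 0)
      + ∑ n ∈ Finset.Ioc N (M' + q), (if IsUnit ((n : ℤ) : ZMod q) then (1:ℝ) else 0)
      = (q.totient : ℝ) := by
    rw [← Finset.sum_union (aux_disjoint _ _ _),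
      Finset.Ioc_union_Ioc_eq_Ioc h1 h2.le,
      aux_sum_Ioc_eq_sum_zmod (fun x => if IsUnit x then (1:ℝ) else 0) M',
      Finset.sum_boole, ← ZMod.card_units_eq_totient q]
    congr 1
    rw [Fintype.card]
    refine (Finset.card_bij (s := (Finset.univ : Finset (ZMod q)ˣ))
      (t := Finset.filter (fun x : ZMod q => IsUnit x) Finset.univ)
      (fun u _ => (u : ZMod q)) ?_ ?_ ?_).symm
    · intro u _; simp [Finset.mem_filter]
    · intro u _ v _ h; exact Units.ext h
    · intro x hx
      exact ⟨(Finset.mem_filter.mp hx).2.unit, Finset.mem_univ _, rfl⟩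
  have hS1 : ‖S‖ ≤ ∑ n ∈ Finset.Ioc M' N,
      (if IsUnit ((n : ℤ) : ZMod q) then (1:ℝ) else 0) := hbound _ _
  have hS2 : ‖S‖ ≤ ∑ n ∈ Finset.Ioc N (M' + q),
      (if IsUnit ((n : ℤ) : ZMod q) then (1:ℝ) else 0) := by
    have hneg : S = -T := by linear_combination hST
    rw [hneg, norm_neg]
    exact hbound _ _
  linarith
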